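/- Let X = {x, y, z} with the deg-lex order induced by x < y < z, and let R = {yz − x, zx − xy, yxy − xx, yxx − xxz, yxxx − xxxy} ⊂ K⟨X*⟩. Then R is a noncommutative Gröbner basis of the two-sided ideal it generates: every overlap ambiguity of R is solvable, equivalently all S-polynomials of R reduce to zero modulo R. -/

import Mathlib

/-- The operator `S_{n,m}` extending `S` : it fixes monomials of length `< n + m`, and
sends `w = w₁w₂w₃` with `|w₁| = n`, `|w₃| = m` to `w₁ ⬝ S(w₂) ⬝ w₃`. -/
noncomputable def extOp {K X : Type*} [Field K]
    (S : MonoidAlgebra K (FreeMonoid X) →ₗ[K] MonoidAlgebra K (FreeMonoid X)) (n m : ℕ) :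
    MonoidAlgebra K (FreeMonoid X) →ₗ[K] MonoidAlgebra K (FreeMonoid X) :=
  (Finsupp.lift (MonoidAlgebra K (FreeMonoid X)) K (FreeMonoid X) fun w =>
    if w.length < n + m then MonoidAlgebra.single w 1
    else
      MonoidAlgebra.single (FreeMonoid.ofList (w.toList.take n)) (1 : K) *
        S (MonoidAlgebra.single
            (FreeMonoid.ofList ((w.toList.drop n).take (w.toList.length - n - m))) 1) *
        MonoidAlgebra.single (FreeMonoid.ofList (w.toList.drop (w.toList.length - m))) (1 : K))
    ∘ₗ (MonoidAlgebra.coeffLinearEquiv K).toLinearMap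

/-- The degree-lexicographic order on monomials over the alphabet `{x, y, z}` (realised
as `Fin 3` with `x = 0 < y = 1 < z = 2`): compare first by length, then
lexicographically. -/
noncomputable instance : LinearOrder (FreeMonoid (Fin 3)) :=
  LinearOrder.lift' (fun w : FreeMonoid (Fin 3) => toLex (w.length, w.toList))
    (fun a b h => FreeMonoid.toList.injective (congrArg (fun p => (ofLex p).2) h))

/-- The generator `x`. -/
def x : FreeMonoid (Fin 3) := FreeMonoid.of 0
/-- The generator `y`. -/
def y : FreeMonoid (Fin 3) := FreeMonoid.of 1
/-- The generator `z`. -/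
def z : FreeMonoid (Fin 3) := FreeMonoid.of 2

open scoped Classical in
/-- The reduction operator with `S(yz) = x`, `S(zx) = xy` and `S(w) = w` otherwise. -/
noncomputable def Sop (K : Type*) [Field K] :
    MonoidAlgebra K (FreeMonoid (Fin 3)) →ₗ[K] MonoidAlgebra K (FreeMonoid (Fin 3)) :=
  (Finsupp.lift (MonoidAlgebra K (FreeMonoid (Fin 3))) K (FreeMonoid (Fin 3)) fun w =>
    if w = y * z then MonoidAlgebra.single x 1
    else if w = z * x then MonoidAlgebra.single (x * y) 1
    else MonoidAlgebra.single w 1)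
    ∘ₗ (MonoidAlgebra.coeffLinearEquiv K).toLinearMap

/-- `w` is the leading monomial of `f`. -/
def IsLm {K : Type*} [Field K] (f : MonoidAlgebra K (FreeMonoid (Fin 3)))
    (w : FreeMonoid (Fin 3)) : Prop :=
  w ∈ f.coeff.support ∧ ∀ u ∈ f.coeff.support, u ≤ w

/-- `R` is a noncommutative Gröbner basis of the two-sided ideal `I`: the leading
monomials of elements of `R` generate the monomial ideal of leading monomials of `I`. -/
def IsGroebnerBasis {K : Type*} [Field K] (R : Set (MonoidAlgebra K (FreeMonoid (Fin 3))))
    (I : TwoSidedIdeal (MonoidAlgebra K (FreeMonoid (Fin 3)))) : Prop :=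
  ∀ f ∈ I, f ≠ 0 → ∃ r ∈ R, ∃ a b wf wr : FreeMonoid (Fin 3),
    IsLm f wf ∧ IsLm r wr ∧ wf = a * wr * b

namespace NCGB

abbrev W := List (Fin 3)

/-- base-3 value, most significant digit first -/
def val : W → ℕ
  | [] => 0
  | a :: t => a.val * 3 ^ t.length + val t

lemma val_lt (w : W) : val w < 3 ^ w.length := by
  induction w with
  | nil => simp [val]
  | cons a t ih =>
    have : a.val ≤ 2 := by omega
    simp only [val, List.length_cons, pow_succ]
    nlinarith [ih]

/-- deg-lex measure -/
def m (w : W) : ℕ := 3 ^ w.length + val w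

inductive Rw : W → W → Prop
  | base1 (t : W) : Rw (1 :: 2 :: t) (0 :: t)
  | base2 (t : W) : Rw (2 :: 0 :: t) (0 :: 1 :: t)
  | base3 (t : W) : Rw (1 :: 0 :: 1 :: t) (0 :: 0 :: t)
  | base4 (t : W) : Rw (1 :: 0 :: 0 :: t) (0 :: 0 :: 2 :: t)
  | cons (a : Fin 3) {w u : W} : Rw w u → Rw (a :: w) (a :: u)

lemma Rw.length_le {w u : W} (h : Rw w u) : u.length ≤ w.length := by
  induction h <;> simp_all

lemma Rw.m_lt {w u : W} (h : Rw w u) : m u < m w := by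
  induction h with
  | cons a h ih =>
    have hA : (3:ℕ) ^ _ ≤ 3 ^ _ := Nat.pow_le_pow_right (by norm_num) h.length_le
    have hB := Nat.mul_le_mul_left a.val hA
    simp only [m, val, List.length_cons, pow_succ] at *
    linarith
  | _ =>
    rename_i t
    have h1 := val_lt t
    have h2 : (0:ℕ) < 3 ^ t.length := pow_pos (by norm_num) _
    simp only [m, val, List.length_cons, pow_succ, Fin.val_zero, Fin.val_one, Fin.val_two,
      Fin.isValue]
    linarith

def headRed : W → Option W
  | 1 :: 2 :: t => some (0 :: t)
  | 2 :: 0 :: t => some (0 :: 1 :: t)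
  | 1 :: 0 :: 1 :: t => some (0 :: 0 :: t)
  | 1 :: 0 :: 0 :: t => some (0 :: 0 :: 2 :: t)
  | _ => none

def red : W → Option W
  | [] => none
  | a :: t =>
    match headRed (a :: t) with
    | some u => some u
    | none => (red t).map (a :: ·)

lemma headRed_rw {w u : W} (h : headRed w = some u) : Rw w u := by
  unfold headRed at h
  split at h <;> simp_all <;> subst h
  · exact .base1 _
  · exact .base2 _
  · exact .base3 _
  · exact .base4 _

lemma headRed_none {a : Fin 3} {t v : W} (hn : headRed (a :: t) = none)
    (h : Rw (a :: t) v) : ∃ v', v = a :: v' ∧ Rw t v' := by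
  cases h with
  | base1 t => simp [headRed] at hn
  | base2 t => simp [headRed] at hn
  | base3 t => simp [headRed] at hn
  | base4 t => simp [headRed] at hn
  | cons a h => exact ⟨_, rfl, h⟩

lemma red_rw {w u : W} (h : red w = some u) : Rw w u := by
  induction w generalizing u with
  | nil => simp [red] at h
  | cons a t ih =>
    rw [red] at h
    split at h
    · next heq => exact headRed_rw (heq.trans h)
    · next heq =>
      obtain ⟨u', hu', rfl⟩ := Option.map_eq_some_iff.mp h
      exact .cons a (ih hu')

lemma red_none_no_rw : ∀ {w u : W}, red w = none → ¬ Rw w u := by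
  intro w
  induction w with
  | nil => intro u _ h; cases h
  | cons a t ih =>
    intro u hn h
    rw [red] at hn
    split at hn
    · simp at hn
    · next heq =>
      obtain ⟨v', rfl, hv'⟩ := headRed_none heq h
      exact ih (by simpa using hn) hv'

def nf (w : W) : W :=
  match h : red w with
  | none => w
  | some u => nf u
termination_by m w
decreasing_by exact (red_rw h).m_lt

lemma nf_none {w : W} (h : red w = none) : nf w = w := by
  rw [nf, h]

lemma nf_some {w u : W} (h : red w = some u) : nf w = nf u := by
  rw [nf, h]

abbrev Star := Relation.ReflTransGen Rw

lemma nf_star (w : W) : Star w (nf w) := by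
  match h : red w with
  | none => rw [nf_none h]
  | some u =>
    rw [nf_some h]
    exact .head (red_rw h) (nf_star u)
termination_by m w
decreasing_by exact (red_rw h).m_lt

lemma nf_irreducible (w : W) : red (nf w) = none := by
  match h : red w with
  | none => rw [nf_none h, h]
  | some u => rw [nf_some h]; exact nf_irreducible u
termination_by m w
decreasing_by exact (red_rw h).m_lt

def Join (u v : W) : Prop := ∃ c, Star u c ∧ Star v c

lemma Rw.star {w u : W} (h : Rw w u) : Star w u := Relation.ReflTransGen.single h

lemma Join.refl (u : W) : Join u u := ⟨u, .refl, .refl⟩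

lemma Join.symm {u v : W} (h : Join u v) : Join v u := by obtain ⟨c, h1, h2⟩ := h; exact ⟨c, h2, h1⟩

lemma star_cons (a : Fin 3) {w u : W} (h : Star w u) : Star (a :: w) (a :: u) :=
  Relation.ReflTransGen.lift (a :: ·) (fun _ _ h => Rw.cons a h) _ _ h

lemma Join.cons (a : Fin 3) {u v : W} (h : Join u v) : Join (a :: u) (a :: v) := by
  obtain ⟨c, h1, h2⟩ := h; exact ⟨a :: c, star_cons a h1, star_cons a h2⟩

lemma LCbase1 {t v : W} (h : Rw (1 :: 2 :: t) v) : Join (0 :: t) v := by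
  cases h with
  | base1 => exact .refl _
  | cons _ h =>
    cases h with
    | base2 t₂ => exact ⟨0 :: 0 :: t₂, .refl, (Rw.base3 t₂).star⟩
    | cons _ h => exact ⟨0 :: _, (Rw.cons 0 h).star, (Rw.base1 _).star⟩

lemma LCbase2 {t v : W} (h : Rw (2 :: 0 :: t) v) : Join (0 :: 1 :: t) v := by
  cases h with
  | base2 => exact .refl _
  | cons _ h =>
    cases h with
    | cons _ h => exact ⟨0 :: 1 :: _, (Rw.cons 0 (Rw.cons 1 h)).star, (Rw.base2 _).star⟩

lemma LCbase3 {t v : W} (h : Rw (1 :: 0 :: 1 :: t) v) : Join (0 :: 0 :: t) v := by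
  cases h with
  | base3 => exact .refl _
  | cons _ h =>
    cases h with
    | cons _ h =>
      cases h with
      | base1 t₂ => exact ⟨0 :: 0 :: 2 :: t₂, .refl, (Rw.base4 t₂).star⟩
      | base3 t₂ =>
        exact ⟨0 :: 0 :: 0 :: 1 :: t₂, .refl,
          .head (Rw.base4 (0 :: t₂)) (Rw.cons 0 (Rw.cons 0 (Rw.base2 t₂))).star⟩
      | base4 t₂ =>
        exact ⟨0 :: 0 :: 0 :: 0 :: t₂, .refl,
          .head (Rw.base4 (0 :: 2 :: t₂))
            (.head (Rw.cons 0 (Rw.cons 0 (Rw.base2 (2 :: t₂))))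
              (Rw.cons 0 (Rw.cons 0 (Rw.cons 0 (Rw.base1 t₂)))).star)⟩
      | cons _ h =>
        exact ⟨0 :: 0 :: _, (Rw.cons 0 (Rw.cons 0 h)).star, (Rw.base3 _).star⟩

lemma LCbase4 {t v : W} (h : Rw (1 :: 0 :: 0 :: t) v) : Join (0 :: 0 :: 2 :: t) v := by
  cases h with
  | base4 => exact .refl _
  | cons _ h =>
    cases h with
    | cons _ h =>
      cases h with
      | cons _ h =>
        exact ⟨0 :: 0 :: 2 :: _, (Rw.cons 0 (Rw.cons 0 (Rw.cons 2 h))).star, (Rw.base4 _).star⟩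

lemma LC {w u v : W} (h₁ : Rw w u) (h₂ : Rw w v) : Join u v := by
  induction h₁ generalizing v with
  | base1 t => exact LCbase1 h₂
  | base2 t => exact LCbase2 h₂
  | base3 t => exact LCbase3 h₂
  | base4 t => exact LCbase4 h₂
  | cons a h ih =>
    cases h₂ with
    | base1 => exact (LCbase1 (.cons _ h)).symm
    | base2 => exact (LCbase2 (.cons _ h)).symm
    | base3 => exact (LCbase3 (.cons _ h)).symm
    | base4 => exact (LCbase4 (.cons _ h)).symm
    | cons _ h₂ => exact (ih h₂).cons a

lemma star_nf (w u : W) (h : Star w u) : nf w = nf u := by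
  rcases h.cases_head with rfl | ⟨s', hstep, hrest⟩
  · rfl
  · have hmw := hstep.m_lt
    cases hr : red w with
    | none => exact absurd hstep (red_none_no_rw hr)
    | some s =>
      have hms := (red_rw hr).m_lt
      obtain ⟨c, hsc, hs'c⟩ := LC (red_rw hr) hstep
      have e1 : nf s = nf c := star_nf s c hsc
      have e2 : nf s' = nf c := star_nf s' c hs'c
      have e3 : nf s' = nf u := star_nf s' u hrest
      rw [nf_some hr, e1, ← e2, e3]
termination_by m w
decreasing_by · exact hms
              · exact hmw
              · exact hmw

lemma Rw.append_right {w u : W} (b : W) (h : Rw w u) : Rw (w ++ b) (u ++ b) := by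
  induction h with
  | base1 t => exact .base1 (t ++ b)
  | base2 t => exact .base2 (t ++ b)
  | base3 t => exact .base3 (t ++ b)
  | base4 t => exact .base4 (t ++ b)
  | cons a _ ih => exact .cons a ih

lemma Rw.append_left {w u : W} (a : W) (h : Rw w u) : Rw (a ++ w) (a ++ u) := by
  induction a with
  | nil => exact h
  | cons c a ih => exact .cons c ih

lemma star_context (a b : W) {w u : W} (h : Star w u) : Star (a ++ w ++ b) (a ++ u ++ b) :=
  Relation.ReflTransGen.lift (fun w => a ++ w ++ b)
    (fun _ _ h => by simpa [List.append_assoc] using (h.append_right b).append_left a) _ _ h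

lemma nf_context (a b w : W) : nf (a ++ w ++ b) = nf (a ++ nf w ++ b) :=
  star_nf _ _ (star_context a b (nf_star w))

lemma Rw.decomp {w u : W} (h : Rw w u) :
    ∃ a b : W, w = a ++ [1, 2] ++ b ∨ w = a ++ [2, 0] ++ b ∨
      w = a ++ [1, 0, 1] ++ b ∨ w = a ++ [1, 0, 0] ++ b := by
  induction h with
  | base1 t => exact ⟨[], t, by simp⟩
  | base2 t => exact ⟨[], t, by simp⟩
  | base3 t => exact ⟨[], t, by simp⟩
  | base4 t => exact ⟨[], t, by simp⟩
  | cons c _ ih =>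
    obtain ⟨a, b, hab⟩ := ih
    refine ⟨c :: a, b, ?_⟩
    rcases hab with h | h | h | h <;> subst h <;> simp

lemma lex_val : ∀ {l₁ l₂ : W}, l₁.length = l₂.length → List.Lex (· < ·) l₁ l₂ →
    val l₁ < val l₂ := by
  intro l₁ l₂ hlen h
  induction h with
  | nil => simp at hlen
  | @rel a l₁ b l₂ hab =>
    have h1 := val_lt l₁
    have h2 : l₁.length = l₂.length := by simpa using hlen
    have h3 : a.val < b.val := hab
    rw [h2] at h1
    have h4 : (a.val + 1) * 3 ^ l₂.length ≤ b.val * 3 ^ l₂.length :=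
      Nat.mul_le_mul_right _ h3
    simp only [val, h2]
    have h0 : (0:ℕ) ≤ val l₂ := Nat.zero_le _
    nlinarith
  | @cons a l₁ l₂ h ih =>
    have h2 : l₁.length = l₂.length := by simpa using hlen
    simp only [val, h2]
    have := ih h2
    omega

lemma m_lt_of_lt {u w : FreeMonoid (Fin 3)} (h : u < w) : m u.toList < m w.toList := by
  have h' : toLex ((u.length : ℕ), u.toList) < toLex ((w.length : ℕ), w.toList) := h
  rcases Prod.Lex.lt_iff.mp h' with hl | ⟨hl, hlex⟩
  · have hl' : u.toList.length < w.toList.length := hl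
    have hv := val_lt u.toList
    have hp : (3:ℕ) ^ u.toList.length * 3 ≤ 3 ^ w.toList.length := by
      rw [← pow_succ]
      exact Nat.pow_le_pow_right (by norm_num) (by omega)
    simp only [m]
    have := Nat.zero_le (val w.toList)
    omega
  · have hl' : u.toList.length = w.toList.length := hl
    have hlex' : List.Lex (· < ·) u.toList w.toList := hlex
    have := lex_val hl' hlex'
    simp only [m, hl']
    omega

lemma star_m_le {w u : W} (h : Star w u) : m u ≤ m w := by
  induction h with
  | refl => exact le_refl _
  | tail hs ht ih => exact le_trans ht.m_lt.le ih

lemma star_right (b : W) {w u : W} (h : Star w u) : Star (w ++ b) (u ++ b) :=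
  Relation.ReflTransGen.lift (· ++ b) (fun _ _ h => h.append_right b) _ _ h

lemma star_left (a : W) {w u : W} (h : Star w u) : Star (a ++ w) (a ++ u) :=
  Relation.ReflTransGen.lift (a ++ ·) (fun _ _ h => h.append_left a) _ _ h

lemma nf_idem (w : W) : nf (nf w) = nf w := nf_none (nf_irreducible w)

lemma nf_append_left (a b : W) : nf (a ++ b) = nf (nf a ++ b) :=
  star_nf _ _ (star_right b (nf_star a))

lemma nf_append_right (a b : W) : nf (a ++ b) = nf (a ++ nf b) :=
  star_nf _ _ (star_left a (nf_star b))

section Algebra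

variable {K : Type*} [Field K]

noncomputable def N : MonoidAlgebra K (FreeMonoid (Fin 3)) →ₗ[K] MonoidAlgebra K (FreeMonoid (Fin 3)) :=
  (Finsupp.lift (MonoidAlgebra K (FreeMonoid (Fin 3))) K (FreeMonoid (Fin 3)) fun w =>
    MonoidAlgebra.single (FreeMonoid.ofList (nf w.toList)) 1)
    ∘ₗ (MonoidAlgebra.coeffLinearEquiv K).toLinearMap

lemma N_apply (f : MonoidAlgebra K (FreeMonoid (Fin 3))) :
    N f = f.coeff.sum fun w c => c • MonoidAlgebra.single (FreeMonoid.ofList (nf w.toList)) (1:K) := by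
  rfl

lemma N_single (w : FreeMonoid (Fin 3)) (c : K) :
    N (MonoidAlgebra.single w c) =
      c • MonoidAlgebra.single (FreeMonoid.ofList (nf w.toList)) (1:K) := by
  rw [N_apply, MonoidAlgebra.coeff_single, Finsupp.sum_single_index]
  simp

lemma N_mul_left (p q : MonoidAlgebra K (FreeMonoid (Fin 3))) : N (p * q) = N (N p * q) := by
  induction p using MonoidAlgebra.induction_linear with
  | zero => simp
  | add f g hf hg => simp only [add_mul, map_add, hf, hg]
  | single a c =>
    induction q using MonoidAlgebra.induction_linear with
    | zero => simp
    | add f g hf hg => simp only [mul_add, map_add, hf, hg]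
    | single b d =>
      have hnf : nf ((a * b).toList) =
          nf ((FreeMonoid.ofList (nf a.toList) * b).toList) := by
        rw [FreeMonoid.toList_mul, FreeMonoid.toList_mul, FreeMonoid.toList_ofList]
        exact nf_append_left a.toList b.toList
      rw [MonoidAlgebra.single_mul_single, N_single, N_single, smul_mul_assoc,
        MonoidAlgebra.single_mul_single, one_mul, map_smul, N_single, smul_smul, hnf]

lemma N_mul_right (p q : MonoidAlgebra K (FreeMonoid (Fin 3))) : N (p * q) = N (p * N q) := by
  induction q using MonoidAlgebra.induction_linear with
  | zero => simp
  | add f g hf hg => simp only [mul_add, map_add, hf, hg]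
  | single b d =>
    induction p using MonoidAlgebra.induction_linear with
    | zero => simp
    | add f g hf hg => simp only [add_mul, map_add, hf, hg]
    | single a c =>
      have hnf : nf ((a * b).toList) =
          nf ((a * FreeMonoid.ofList (nf b.toList)).toList) := by
        rw [FreeMonoid.toList_mul, FreeMonoid.toList_mul, FreeMonoid.toList_ofList]
        rw [nf_append_right a.toList b.toList, nf_append_right a.toList (nf b.toList),
          nf_idem]
      rw [MonoidAlgebra.single_mul_single, N_single, N_single, mul_smul_comm,
        MonoidAlgebra.single_mul_single, mul_one, map_smul, N_single, smul_smul,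
        mul_comm c d, hnf]

lemma N_gen {w₁ w₂ : FreeMonoid (Fin 3)} (h : nf w₁.toList = nf w₂.toList) :
    N (MonoidAlgebra.single w₁ (1:K) - MonoidAlgebra.single w₂ 1) = 0 := by
  rw [map_sub, N_single, N_single, one_smul, one_smul, h, sub_self]

noncomputable def kerN (K : Type*) [Field K] :
    TwoSidedIdeal (MonoidAlgebra K (FreeMonoid (Fin 3))) :=
  TwoSidedIdeal.mk' {f | N f = 0}
    (map_zero N)
    (fun {p q} hp hq => by
      simp only [Set.mem_setOf_eq] at *
      rw [map_add, hp, hq, add_zero])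
    (fun {p} hp => by
      simp only [Set.mem_setOf_eq] at *
      rw [map_neg, hp, neg_zero])
    (fun {p q} hq => by
      simp only [Set.mem_setOf_eq] at *
      rw [N_mul_right, hq, mul_zero, map_zero])
    (fun {p q} hp => by
      simp only [Set.mem_setOf_eq] at *
      rw [N_mul_left, hp, zero_mul, map_zero])

lemma mem_kerN {f : MonoidAlgebra K (FreeMonoid (Fin 3))} :
    f ∈ kerN K ↔ N f = 0 := by
  rw [kerN, TwoSidedIdeal.mem_mk']
  rfl

lemma isLm_sub {w₁ w₂ : FreeMonoid (Fin 3)} (h : w₂ < w₁) :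
    IsLm (MonoidAlgebra.single w₁ (1:K) - MonoidAlgebra.single w₂ 1) w₁ := by
  have hne : w₂ ≠ w₁ := ne_of_lt h
  constructor
  · rw [Finsupp.mem_support_iff, MonoidAlgebra.coeff_sub, Finsupp.sub_apply,
      MonoidAlgebra.coeff_single, MonoidAlgebra.coeff_single, Finsupp.single_eq_same,
      Finsupp.single_apply, if_neg hne, sub_zero]
    exact one_ne_zero
  · intro u hu
    rw [MonoidAlgebra.coeff_sub] at hu
    have := Finsupp.support_sub hu
    rw [Finset.mem_union] at this
    rcases this with h1 | h1 <;>
      rcases Finsupp.mem_support_iff.mp h1 with h2 <;>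
      rw [MonoidAlgebra.coeff_single, Finsupp.single_apply] at h2
    · rcases ne_or_eq w₁ u with h3 | h3
      · rw [if_neg h3] at h2; exact absurd rfl h2
      · exact h3.ge
    · rcases ne_or_eq w₂ u with h3 | h3
      · rw [if_neg h3] at h2; exact absurd rfl h2
      · exact h3 ▸ h.le

lemma nf_gen1 : nf (FreeMonoid.toList (y * z)) = nf (FreeMonoid.toList x) := by
  show nf [1, 2] = nf [0]
  exact star_nf _ _ (Rw.base1 []).star

lemma nf_gen2 : nf (FreeMonoid.toList (z * x)) = nf (FreeMonoid.toList (x * y)) := by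
  show nf [2, 0] = nf [0, 1]
  exact star_nf _ _ (Rw.base2 []).star

lemma nf_gen3 : nf (FreeMonoid.toList (y * x * y)) = nf (FreeMonoid.toList (x * x)) := by
  show nf [1, 0, 1] = nf [0, 0]
  exact star_nf _ _ (Rw.base3 []).star

lemma nf_gen4 : nf (FreeMonoid.toList (y * x * x)) = nf (FreeMonoid.toList (x * x * z)) := by
  show nf [1, 0, 0] = nf [0, 0, 2]
  exact star_nf _ _ (Rw.base4 []).star

lemma nf_gen5 : nf (FreeMonoid.toList (y * x * x * x)) = nf (FreeMonoid.toList (x * x * x * y)) := by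
  show nf [1, 0, 0, 0] = nf [0, 0, 0, 1]
  exact star_nf _ _ (.head (Rw.base4 [0]) (Rw.cons 0 (Rw.cons 0 (Rw.base2 []))).star)

end Algebra

end NCGB

open NCGB

theorem stmt_17 {K : Type*} [Field K] :
    IsGroebnerBasis
      ({MonoidAlgebra.single (y * z) 1 - MonoidAlgebra.single x 1,
        MonoidAlgebra.single (z * x) 1 - MonoidAlgebra.single (x * y) 1,
        MonoidAlgebra.single (y * x * y) 1 - MonoidAlgebra.single (x * x) 1,
        MonoidAlgebra.single (y * x * x) 1 - MonoidAlgebra.single (x * x * z) 1,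
        MonoidAlgebra.single (y * x * x * x) 1 - MonoidAlgebra.single (x * x * x * y) 1} :
        Set (MonoidAlgebra K (FreeMonoid (Fin 3))))
      (TwoSidedIdeal.span
        ({MonoidAlgebra.single (y * z) 1 - MonoidAlgebra.single x 1,
          MonoidAlgebra.single (z * x) 1 - MonoidAlgebra.single (x * y) 1,
          MonoidAlgebra.single (y * x * y) 1 - MonoidAlgebra.single (x * x) 1,
          MonoidAlgebra.single (y * x * x) 1 - MonoidAlgebra.single (x * x * z) 1,
          MonoidAlgebra.single (y * x * x * x) 1 - MonoidAlgebra.single (x * x * x * y) 1} :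
          Set (MonoidAlgebra K (FreeMonoid (Fin 3))))) := by
  intro f hf hne
  have hNf : N f = 0 := by
    refine mem_kerN.mp (TwoSidedIdeal.mem_span_iff.mp hf (kerN K) ?_)
    intro g hg
    rw [SetLike.mem_coe, mem_kerN]
    rcases hg with rfl | rfl | rfl | rfl | rfl
    · exact N_gen nf_gen1
    · exact N_gen nf_gen2
    · exact N_gen nf_gen3
    · exact N_gen nf_gen4
    · exact N_gen nf_gen5
  have hsupp : f.coeff.support.Nonempty :=
    Finsupp.support_nonempty_iff.mpr (by rwa [Ne, MonoidAlgebra.coeff_eq_zero])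
  set wf := f.coeff.support.max' hsupp with hwf
  have hmem : wf ∈ f.coeff.support := f.coeff.support.max'_mem hsupp
  have hlm : IsLm f wf := ⟨hmem, fun u hu => f.coeff.support.le_max' u hu⟩
  cases hr : red wf.toList with
  | none =>
    exfalso
    have hwfnf : nf wf.toList = wf.toList := nf_none hr
    have key : (N f).coeff wf = f.coeff wf := by
      rw [N_apply, Finsupp.sum, MonoidAlgebra.coeff_sum, Finset.sum_apply', Finset.sum_eq_single wf]
      · rw [MonoidAlgebra.coeff_smul, Finsupp.smul_apply, hwfnf, FreeMonoid.ofList_toList,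
          MonoidAlgebra.coeff_single, Finsupp.single_eq_same,
          smul_eq_mul, mul_one]
      · intro u hu hune
        have hult : u < wf := lt_of_le_of_ne (hlm.2 u hu) hune
        have h1 : m (nf u.toList) ≤ m u.toList := star_m_le (nf_star _)
        have h2 : m u.toList < m wf.toList := m_lt_of_lt hult
        have hne2 : FreeMonoid.ofList (nf u.toList) ≠ wf := by
          intro hEq
          have h3 : nf u.toList = wf.toList := by
            rw [← FreeMonoid.toList_ofList (nf u.toList), hEq]
          rw [h3] at h1
          omega
        rw [MonoidAlgebra.coeff_smul, Finsupp.smul_apply, MonoidAlgebra.coeff_single,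
          Finsupp.single_apply, if_neg hne2, smul_zero]
      · intro h; exact absurd hmem h
    rw [hNf, MonoidAlgebra.coeff_zero, Finsupp.zero_apply] at key
    exact Finsupp.mem_support_iff.mp hmem key.symm
  | some u =>
    obtain ⟨a, b, hd⟩ := (red_rw hr).decomp
    have hto : ∀ (p : FreeMonoid (Fin 3)), p.toList = a ++ p.toList ++ b → True := fun _ _ => trivial
    rcases hd with h | h | h | h
    · refine ⟨_, Or.inl rfl, FreeMonoid.ofList a, FreeMonoid.ofList b, wf, y * z, hlm,
        isLm_sub (by decide), ?_⟩
      apply FreeMonoid.toList.injective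
      simp only [FreeMonoid.toList_mul, FreeMonoid.toList_ofList, h]
      show _ = a ++ FreeMonoid.toList (y * z) ++ b
      simp [y, z, List.append_assoc]
    · refine ⟨_, Or.inr (Or.inl rfl), FreeMonoid.ofList a, FreeMonoid.ofList b, wf, z * x, hlm,
        isLm_sub (by decide), ?_⟩
      apply FreeMonoid.toList.injective
      simp only [FreeMonoid.toList_mul, FreeMonoid.toList_ofList, h]
      show _ = a ++ FreeMonoid.toList (z * x) ++ b
      simp [x, z, List.append_assoc]
    · refine ⟨_, Or.inr (Or.inr (Or.inl rfl)), FreeMonoid.ofList a, FreeMonoid.ofList b, wf,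
        y * x * y, hlm, isLm_sub (by decide), ?_⟩
      apply FreeMonoid.toList.injective
      simp only [FreeMonoid.toList_mul, FreeMonoid.toList_ofList, h]
      show _ = a ++ FreeMonoid.toList (y * x * y) ++ b
      simp [x, y, List.append_assoc]
    · refine ⟨_, Or.inr (Or.inr (Or.inr (Or.inl rfl))), FreeMonoid.ofList a, FreeMonoid.ofList b,
        wf, y * x * x, hlm, isLm_sub (by decide), ?_⟩
      apply FreeMonoid.toList.injective
      simp only [FreeMonoid.toList_mul, FreeMonoid.toList_ofList, h]
      show _ = a ++ FreeMonoid.toList (y * x * x) ++ b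
      simp [x, y, List.append_assoc]
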